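/- Let X be Gamma(m₁, θ₁) and Y be Gamma(m₂, θ₂) independent, and Z an independent nonnegative random variable with density f and finite m-th moment for m = min(m₁, m₂). Suppose θᵢ = Ωᵢ γ̄/mᵢ. Then P[min(X,Y) < Z] → 0 as γ̄ → ∞, and moreover P[min(X,Y) < Z] = O(γ̄^{-min(m₁,m₂)}). -/

import Mathlib

open Real MeasureTheory Filter Asymptotics Set

/-- The complementary CDF of a Gamma random variable with shape `m` and scale `θ`. -/
noncomputable def gammaCCDF (m θ x : ℝ) : ℝ :=
    ∫ t in Set.Ioi x, t ^ (m - 1) * Real.exp (-t / θ) / (Real.Gamma m * θ ^ m)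

namespace Stmt16Aux

lemma pdf_integrableOn {m θ : ℝ} (hm : 0 < m) (hθ : 0 < θ) :
    IntegrableOn (fun t : ℝ => t ^ (m - 1) * Real.exp (-t / θ) / (Real.Gamma m * θ ^ m))
      (Ioi 0) := by
  have h := integrableOn_rpow_mul_exp_neg_mul_rpow (p := 1) (s := m - 1) (b := 1/θ)
    (by linarith) zero_lt_one (by positivity)
  have h2 : IntegrableOn (fun t : ℝ => t ^ (m - 1) * Real.exp (-t / θ)) (Ioi 0) := by
    refine h.congr_fun (fun x hx => ?_) measurableSet_Ioi
    dsimp only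
    rw [Real.rpow_one]
    congr 1
    ring
  simpa [div_eq_mul_inv, IntegrableOn] using h2.mul_const (Real.Gamma m * θ ^ m)⁻¹

lemma pdf_integral {m θ : ℝ} (hm : 0 < m) (hθ : 0 < θ) :
    ∫ t in Ioi (0:ℝ), t ^ (m - 1) * Real.exp (-t / θ) / (Real.Gamma m * θ ^ m) = 1 := by
  have h := Real.integral_rpow_mul_exp_neg_mul_Ioi (a := m) (r := 1/θ) hm (by positivity)
  rw [one_div_one_div] at h
  have h2 : ∫ t in Ioi (0:ℝ), t ^ (m - 1) * Real.exp (-t / θ) = θ ^ m * Real.Gamma m := by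
    rw [← h]
    refine setIntegral_congr_fun measurableSet_Ioi (fun t ht => ?_)
    congr 1
    ring
  rw [integral_div, h2, div_eq_one_iff_eq (by positivity)]
  ring

lemma pdf_nonneg {m θ : ℝ} (hm : 0 < m) (hθ : 0 < θ) {t : ℝ} (ht : 0 ≤ t) :
    0 ≤ t ^ (m - 1) * Real.exp (-t / θ) / (Real.Gamma m * θ ^ m) := by
  have h1 : 0 ≤ t ^ (m - 1) := Real.rpow_nonneg ht _
  have h2 : 0 < Real.Gamma m := Real.Gamma_pos_of_pos hm
  have h3 : 0 < θ ^ m := Real.rpow_pos_of_pos hθ _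
  positivity

lemma ccdf_nonneg {m θ : ℝ} (hm : 0 < m) (hθ : 0 < θ) {x : ℝ} (hx : 0 < x) :
    0 ≤ gammaCCDF m θ x :=
  setIntegral_nonneg measurableSet_Ioi fun t ht => pdf_nonneg hm hθ (hx.le.trans (le_of_lt ht))

lemma ccdf_le_one {m θ : ℝ} (hm : 0 < m) (hθ : 0 < θ) {x : ℝ} (hx : 0 < x) :
    gammaCCDF m θ x ≤ 1 := by
  rw [← pdf_integral hm hθ]
  refine setIntegral_mono_set (pdf_integrableOn hm hθ) ?_ ?_
  · filter_upwards [ae_restrict_mem measurableSet_Ioi] with t ht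
    exact pdf_nonneg hm hθ (le_of_lt ht)
  · exact HasSubset.Subset.eventuallyLE (Ioi_subset_Ioi hx.le)

lemma one_sub_ccdf_le {m θ : ℝ} (hm : 0 < m) (hθ : 0 < θ) {x : ℝ} (hx : 0 < x) :
    1 - gammaCCDF m θ x ≤ x ^ m / m / (Real.Gamma m * θ ^ m) := by
  have hΓ : 0 < Real.Gamma m := Real.Gamma_pos_of_pos hm
  have hθm : 0 < θ ^ m := Real.rpow_pos_of_pos hθ _
  have hsplit : (1:ℝ) - gammaCCDF m θ x
      = ∫ t in Ioc (0:ℝ) x, t ^ (m - 1) * Real.exp (-t / θ) / (Real.Gamma m * θ ^ m) := by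
    have hu : Ioc (0:ℝ) x ∪ Ioi x = Ioi 0 := Ioc_union_Ioi_eq_Ioi hx.le
    have := setIntegral_union (Set.Ioc_disjoint_Ioi le_rfl) measurableSet_Ioi
      ((pdf_integrableOn hm hθ).mono_set (by rw [← hu]; exact subset_union_left))
      ((pdf_integrableOn hm hθ).mono_set (by rw [← hu]; exact subset_union_right))
      (f := fun t : ℝ => t ^ (m - 1) * Real.exp (-t / θ) / (Real.Gamma m * θ ^ m))
      (μ := volume)
    rw [hu] at this
    rw [pdf_integral hm hθ] at this
    rw [gammaCCDF]
    linarith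
  rw [hsplit]
  have hle : ∫ t in Ioc (0:ℝ) x, t ^ (m - 1) * Real.exp (-t / θ) / (Real.Gamma m * θ ^ m)
      ≤ ∫ t in Ioc (0:ℝ) x, t ^ (m - 1) / (Real.Gamma m * θ ^ m) := by
    refine setIntegral_mono_on
      ((pdf_integrableOn hm hθ).mono_set Ioc_subset_Ioi_self)
      (((intervalIntegral.intervalIntegrable_rpow' (by linarith)).1).div_const _)
      measurableSet_Ioc (fun t ht => ?_)
    have h1 : Real.exp (-t / θ) ≤ 1 := by
      rw [Real.exp_le_one_iff]
      exact div_nonpos_of_nonpos_of_nonneg (by linarith [ht.1]) hθ.le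
    calc t ^ (m - 1) * Real.exp (-t / θ) / (Real.Gamma m * θ ^ m)
        ≤ t ^ (m - 1) * 1 / (Real.Gamma m * θ ^ m) := by
          gcongr
          exact Real.rpow_nonneg ht.1.le _
      _ = t ^ (m - 1) / (Real.Gamma m * θ ^ m) := by rw [mul_one]
  refine hle.trans ?_
  rw [integral_div, ← intervalIntegral.integral_of_le hx.le,
    integral_rpow (Or.inl (by linarith : (-1:ℝ) < m - 1))]
  rw [show m - 1 + 1 = m by ring, Real.zero_rpow hm.ne']
  rw [sub_zero]

/-- The key pointwise estimate with the scale `θ = Ω γ / m`. -/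
lemma one_sub_ccdf_key {m Ω : ℝ} (hm : 0 < m) (hΩ : 0 < Ω) {mmin : ℝ}
    (hmin : 0 < mmin) (hminle : mmin ≤ m) {γ x : ℝ} (hγ : 1 ≤ γ) (hx : 0 < x) :
    1 - gammaCCDF m (Ω * γ / m) x
      ≤ max 1 (m ^ m / (m * Real.Gamma m * Ω ^ m)) * (x ^ mmin * γ ^ (-mmin)) := by
  have hγ0 : (0:ℝ) < γ := by linarith
  have hθ : 0 < Ω * γ / m := by positivity
  have hΓ : 0 < Real.Gamma m := Real.Gamma_pos_of_pos hm
  set a := m ^ m / (m * Real.Gamma m * Ω ^ m) with ha_def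
  have ha : 0 < a := by
    have h1 : 0 < m ^ m := Real.rpow_pos_of_pos hm _
    have h2 : 0 < Ω ^ m := Real.rpow_pos_of_pos hΩ _
    positivity
  set u := x / γ with hu_def
  have hu : 0 < u := by positivity
  have key1 : 1 - gammaCCDF m (Ω * γ / m) x ≤ a * u ^ m := by
    refine (one_sub_ccdf_le hm hθ hx).trans (le_of_eq ?_)
    rw [ha_def, hu_def, Real.div_rpow (by positivity) hm.le,
      Real.mul_rpow hΩ.le hγ0.le, Real.div_rpow hx.le hγ0.le]
    have h1 : m ^ m ≠ 0 := (Real.rpow_pos_of_pos hm _).ne'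
    have h2 : Ω ^ m ≠ 0 := (Real.rpow_pos_of_pos hΩ _).ne'
    have h3 : γ ^ m ≠ 0 := (Real.rpow_pos_of_pos hγ0 _).ne'
    field_simp
  have key2 : 1 - gammaCCDF m (Ω * γ / m) x ≤ 1 := by
    linarith [ccdf_nonneg hm hθ hx]
  have hu_eq : u ^ mmin = x ^ mmin * γ ^ (-mmin) := by
    rw [hu_def, Real.div_rpow hx.le hγ0.le, Real.rpow_neg hγ0.le, div_eq_mul_inv]
  rw [← hu_eq]
  have humin : 0 ≤ u ^ mmin := Real.rpow_nonneg hu.le _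
  rcases le_or_gt u 1 with h | h
  · have h1 : u ^ m ≤ u ^ mmin := Real.rpow_le_rpow_of_exponent_ge hu h hminle
    have h2 : a * u ^ m ≤ max 1 a * u ^ mmin := by
      have := mul_le_mul (le_max_right 1 a) h1 (Real.rpow_nonneg hu.le _) (by positivity)
      linarith
    linarith
  · have h1 : (1:ℝ) ≤ u ^ mmin := Real.one_le_rpow h.le hmin.le
    have h2 : (1:ℝ) ≤ max 1 a * u ^ mmin := by
      calc (1:ℝ) = 1 * 1 := by ring
        _ ≤ max 1 a * u ^ mmin := mul_le_mul (le_max_left 1 a) h1 zero_le_one (by positivity)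
    linarith

end Stmt16Aux

open Stmt16Aux in
/-- Let `X ~ Gamma(m₁, Ω₁ γ̄ / m₁)` and `Y ~ Gamma(m₂, Ω₂ γ̄ / m₂)` be independent,
and `Z` an independent nonnegative random variable with density `f` having a finite
`min(m₁,m₂)`-th moment. By independence,
`P[min(X,Y) < Z] = ∫₀^∞ (1 - F̄_X(x) F̄_Y(x)) f(x) dx`; this probability tends to `0`
as `γ̄ → ∞` and is `O(γ̄^(-min(m₁,m₂)))`. -/
theorem stmt_16 (m₁ m₂ Ω₁ Ω₂ : ℝ) (hm₁ : 0 < m₁) (hm₂ : 0 < m₂)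
    (hΩ₁ : 0 < Ω₁) (hΩ₂ : 0 < Ω₂)
    (f : ℝ → ℝ) (hfmeas : Measurable f) (hfpos : ∀ x, 0 ≤ f x)
    (hfone : ∫ x in Set.Ioi (0 : ℝ), f x = 1)
    (hmoment : IntegrableOn (fun x => x ^ min m₁ m₂ * f x) (Set.Ioi 0))
    (P : ℝ → ℝ)
    (hP : ∀ γ : ℝ, 0 < γ → P γ = ∫ x in Set.Ioi (0 : ℝ),
      (1 - gammaCCDF m₁ (Ω₁ * γ / m₁) x * gammaCCDF m₂ (Ω₂ * γ / m₂) x) * f x) :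
    Tendsto P atTop (nhds 0) ∧ P =O[atTop] fun γ : ℝ => γ ^ (-(min m₁ m₂)) := by
  set m := min m₁ m₂ with hm_def
  have hm : 0 < m := lt_min hm₁ hm₂
  set c₁ := max 1 (m₁ ^ m₁ / (m₁ * Real.Gamma m₁ * Ω₁ ^ m₁)) with hc₁_def
  set c₂ := max 1 (m₂ ^ m₂ / (m₂ * Real.Gamma m₂ * Ω₂ ^ m₂)) with hc₂_def
  set C := c₁ + c₂ with hC_def
  have hc₁ : (1:ℝ) ≤ c₁ := le_max_left _ _
  have hc₂ : (1:ℝ) ≤ c₂ := le_max_left _ _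
  have hC : (0:ℝ) < C := by simp only [hC_def]; linarith
  set M := ∫ x in Ioi (0:ℝ), x ^ m * f x with hM_def
  -- nonnegativity of P on [1, ∞)
  have hpos : ∀ γ : ℝ, 1 ≤ γ → 0 ≤ P γ := by
    intro γ hγ
    have hγ0 : (0:ℝ) < γ := by linarith
    rw [hP γ hγ0]
    refine setIntegral_nonneg measurableSet_Ioi fun x hx => ?_
    have hθ₁ : 0 < Ω₁ * γ / m₁ := by positivity
    have hθ₂ : 0 < Ω₂ * γ / m₂ := by positivity
    have hA0 := ccdf_nonneg hm₁ hθ₁ hx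
    have hA1 := ccdf_le_one hm₁ hθ₁ hx
    have hB0 := ccdf_nonneg hm₂ hθ₂ hx
    have hB1 := ccdf_le_one hm₂ hθ₂ hx
    have : gammaCCDF m₁ (Ω₁ * γ / m₁) x * gammaCCDF m₂ (Ω₂ * γ / m₂) x ≤ 1 := by
      nlinarith
    exact mul_nonneg (by linarith) (hfpos x)
  -- the key upper bound
  have hbound : ∀ γ : ℝ, 1 ≤ γ → P γ ≤ C * γ ^ (-m) * M := by
    intro γ hγ
    have hγ0 : (0:ℝ) < γ := by linarith
    rw [hP γ hγ0]
    have hptwise : ∀ x ∈ Ioi (0:ℝ),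
        (1 - gammaCCDF m₁ (Ω₁ * γ / m₁) x * gammaCCDF m₂ (Ω₂ * γ / m₂) x) * f x
          ≤ C * γ ^ (-m) * (x ^ m * f x) := by
      intro x hx
      have hx0 : (0:ℝ) < x := hx
      have hθ₁ : 0 < Ω₁ * γ / m₁ := by positivity
      have hθ₂ : 0 < Ω₂ * γ / m₂ := by positivity
      have hA0 := ccdf_nonneg hm₁ hθ₁ hx0
      have hA1 := ccdf_le_one hm₁ hθ₁ hx0
      have hB0 := ccdf_nonneg hm₂ hθ₂ hx0
      have hB1 := ccdf_le_one hm₂ hθ₂ hx0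
      have hK1 := one_sub_ccdf_key hm₁ hΩ₁ hm (min_le_left m₁ m₂) hγ hx0
      have hK2 := one_sub_ccdf_key hm₂ hΩ₂ hm (min_le_right m₁ m₂) hγ hx0
      have hsum : 1 - gammaCCDF m₁ (Ω₁ * γ / m₁) x * gammaCCDF m₂ (Ω₂ * γ / m₂) x
          ≤ (1 - gammaCCDF m₁ (Ω₁ * γ / m₁) x) + (1 - gammaCCDF m₂ (Ω₂ * γ / m₂) x) := by
        nlinarith
      have hmain : 1 - gammaCCDF m₁ (Ω₁ * γ / m₁) x * gammaCCDF m₂ (Ω₂ * γ / m₂) x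
          ≤ C * (x ^ m * γ ^ (-m)) := by
        rw [hC_def]
        rw [hm_def] at hK1 hK2 ⊢
        linarith
      have := mul_le_mul_of_nonneg_right hmain (hfpos x)
      calc (1 - gammaCCDF m₁ (Ω₁ * γ / m₁) x * gammaCCDF m₂ (Ω₂ * γ / m₂) x) * f x
          ≤ (C * (x ^ m * γ ^ (-m))) * f x := this
        _ = C * γ ^ (-m) * (x ^ m * f x) := by ring
    have h0 : 0 ≤ᵐ[volume.restrict (Ioi (0:ℝ))]
        fun x => (1 - gammaCCDF m₁ (Ω₁ * γ / m₁) x * gammaCCDF m₂ (Ω₂ * γ / m₂) x) * f x := by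
      filter_upwards [ae_restrict_mem measurableSet_Ioi] with x hx
      have hx0 : (0:ℝ) < x := hx
      have hθ₁ : 0 < Ω₁ * γ / m₁ := by positivity
      have hθ₂ : 0 < Ω₂ * γ / m₂ := by positivity
      have hA0 := ccdf_nonneg hm₁ hθ₁ hx0
      have hA1 := ccdf_le_one hm₁ hθ₁ hx0
      have hB0 := ccdf_nonneg hm₂ hθ₂ hx0
      have hB1 := ccdf_le_one hm₂ hθ₂ hx0
      have : gammaCCDF m₁ (Ω₁ * γ / m₁) x * gammaCCDF m₂ (Ω₂ * γ / m₂) x ≤ 1 := by nlinarith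
      exact mul_nonneg (by linarith) (hfpos x)
    have hgi : Integrable (fun x => C * γ ^ (-m) * (x ^ m * f x))
        (volume.restrict (Ioi (0:ℝ))) := hmoment.const_mul _
    have hle : (fun x => (1 - gammaCCDF m₁ (Ω₁ * γ / m₁) x * gammaCCDF m₂ (Ω₂ * γ / m₂) x) * f x)
        ≤ᵐ[volume.restrict (Ioi (0:ℝ))] fun x => C * γ ^ (-m) * (x ^ m * f x) := by
      filter_upwards [ae_restrict_mem measurableSet_Ioi] with x hx
      exact hptwise x hx
    calc (∫ x in Ioi (0:ℝ),
          (1 - gammaCCDF m₁ (Ω₁ * γ / m₁) x * gammaCCDF m₂ (Ω₂ * γ / m₂) x) * f x)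
        ≤ ∫ x in Ioi (0:ℝ), C * γ ^ (-m) * (x ^ m * f x) :=
          integral_mono_of_nonneg h0 hgi hle
      _ = C * γ ^ (-m) * M := by rw [integral_const_mul, hM_def]
  have hO : P =O[atTop] fun γ : ℝ => γ ^ (-m) := by
    rw [isBigO_iff]
    refine ⟨C * M, ?_⟩
    filter_upwards [eventually_ge_atTop (1:ℝ)] with γ hγ
    have hγ0 : (0:ℝ) < γ := by linarith
    rw [Real.norm_eq_abs, Real.norm_eq_abs, abs_of_nonneg (hpos γ hγ),
      abs_of_nonneg (Real.rpow_nonneg hγ0.le _)]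
    calc P γ ≤ C * γ ^ (-m) * M := hbound γ hγ
      _ = C * M * γ ^ (-m) := by ring
  exact ⟨hO.trans_tendsto (tendsto_rpow_neg_atTop hm), hO⟩
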